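/- The instruction set with methods {(F,F), (T,T), (I,I), (C,C), (I,F), (I,T)} is strictly 2-size-bounded functionally complete: every primitive Boolean-register instruction is realized by an instruction sequence of length at most 2 over these methods, but some primitive instruction (e.g. ntest(T,C)) is not realized by any single instruction over these methods. -/

import Mathlib

/-- Unary Boolean functions. -/
abbrev BFun := Bool → Bool

/-- Constant-false. -/ def Fb : BFun := fun _ => false
/-- Constant-true. -/  def Tb : BFun := fun _ => true
/-- Identity. -/       def Ib : BFun := fun b => b
/-- Complement. -/     def Cb : BFun := fun b => !b

/-- A Boolean-register method: a reply function and a content-update function. -/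
abbrev Method := BFun × BFun

/-- Primitive instructions for a Boolean register. -/
inductive PrimInstr
  | plain (m : Method)
  | ptest (m : Method)
  | ntest (m : Method)

/-- The method carried by a primitive instruction. -/
def PrimInstr.method : PrimInstr → Method
  | .plain m => m
  | .ptest m => m
  | .ntest m => m

/-- Semantics of a primitive instruction: on register content `b`, return the
new content and whether execution proceeds with the next instruction. -/
def sem : PrimInstr → Bool → Bool × Bool
  | .plain m, b => (m.2 b, true)
  | .ptest m, b => (m.2 b, m.1 b)
  | .ntest m, b => (m.2 b, !(m.1 b))

/-- Instructions occurring in instruction sequences: basic/test instructions,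
forward jumps, and the termination instruction. -/
inductive Instr
  | basic (u : PrimInstr)
  | jump (l : ℕ)
  | halt

/-- Fuel-bounded execution of an instruction sequence on a single Boolean
register, from position `pos` with register content `b`.  `some b'` means
termination with final content `b'`; `none` means divergence/inaction
(jump `#0`, running past the end, or fuel exhaustion). -/
def run : ℕ → List Instr → ℕ → Bool → Option Bool
  | 0, _, _, _ => none
  | fuel + 1, X, pos, b =>
    match X[pos]? with
    | none => none
    | some .halt => some b
    | some (.jump l) => if l = 0 then none else run fuel X (pos + l) b
    | some (.basic u) =>
        let r := sem u b
        run fuel X (pos + if r.2 then 1 else 2) r.1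

/-- The behaviour of an instruction sequence on initial content `b`.
Since all jumps move strictly forward, `X.length + 1` steps suffice. -/
def behav (X : List Instr) (b : Bool) : Option Bool := run (X.length + 1) X 0 b

/-- `X` is an instruction sequence over the method set `M`. -/
def overM (M : Set Method) (X : List Instr) : Prop :=
  ∀ u ∈ X, ∀ v : PrimInstr, u = Instr.basic v → v.method ∈ M

/-- `X` realizes the primitive instruction `u`: for every initial register
content and every number `n` of appended termination instructions, the two
instruction sequences have identical behaviour (termination vs. divergence,
exit position) and identical final register content. -/
def Realizes (X : List Instr) (u : PrimInstr) : Prop :=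
  ∀ (b : Bool) (n : ℕ),
    behav (Instr.basic u :: List.replicate n Instr.halt) b =
    behav (X ++ List.replicate n Instr.halt) b

/-- The instruction set with methods from `M` is `k`-size-bounded functionally
complete. -/
def kComplete (M : Set Method) (k : ℕ) : Prop :=
  ∀ u : PrimInstr, ∃ X : List Instr, overM M X ∧ X.length ≤ k ∧ Realizes X u

def expected (u : PrimInstr) (b : Bool) (n : ℕ) : Option Bool :=
  if (sem u b).2 then (if 1 ≤ n then some (sem u b).1 else none)
  else if 2 ≤ n then some (sem u b).1 else none

lemma behav_single (u : PrimInstr) (b : Bool) (n : ℕ) :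
    behav (.basic u :: List.replicate n .halt) b = expected u b n := by
  rcases n with _ | _ | m <;>
    cases hc : (sem u b).2 <;>
      simp [behav, expected, run, hc, List.replicate_succ]
lemma sem_plain (m : Method) (b : Bool) : sem (.plain m) b = (m.2 b, true) := rfl

lemma behav_skip (m : Method) (b : Bool) (n : ℕ) :
    behav ([.basic (.plain m), .jump 2] ++ List.replicate n .halt) b =
      (if 2 ≤ n then some (m.2 b) else none) := by
  rcases n with _ | _ | k <;> simp [behav, run, sem_plain, List.replicate_succ]

lemma behav_two (w : PrimInstr) (b : Bool) (n : ℕ) :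
    behav ([.basic (.plain (Cb, Cb)), .basic w] ++ List.replicate n .halt) b =
      expected w (!b) n := by
  rcases n with _ | _ | k <;>
    cases hc : (sem w (!b)).2 <;>
      simp [behav, expected, run, sem_plain, Cb, hc, List.replicate_succ]

lemma realizes_iff (X : List Instr) (u : PrimInstr) :
    Realizes X u ↔ ∀ (b : Bool) (n : ℕ),
      expected u b n = behav (X ++ List.replicate n Instr.halt) b := by
  unfold Realizes
  constructor <;> intro h b n <;> rw [← h b n] <;> simp [behav_single]

section
variable {M : Set Method} {u : PrimInstr}

lemma single_realizer (v : PrimInstr) (hm : v.method ∈ M)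
    (hs : ∀ b, sem v b = sem u b) :
    ∃ X : List Instr, overM M X ∧ X.length ≤ 2 ∧ Realizes X u := by
  refine ⟨[.basic v], ?_, by simp, ?_⟩
  · intro i hi w hw
    simp at hi; subst hi
    cases hw; exact hm
  · rw [realizes_iff]
    intro b n
    show _ = behav (.basic v :: List.replicate n .halt) b
    rw [behav_single]
    simp [expected, hs]

lemma skip_realizer (m : Method) (hm : m ∈ M)
    (hs : ∀ b, sem u b = (m.2 b, false)) :
    ∃ X : List Instr, overM M X ∧ X.length ≤ 2 ∧ Realizes X u := by
  refine ⟨[.basic (.plain m), .jump 2], ?_, by simp, ?_⟩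
  · intro i hi w hw
    simp at hi
    rcases hi with hi | hi <;> subst hi <;> cases hw; exact hm
  · rw [realizes_iff]
    intro b n
    rw [behav_skip]
    simp [expected, hs]

lemma two_realizer (w : PrimInstr) (hcc : ((Cb, Cb) : Method) ∈ M)
    (hm : w.method ∈ M) (hs : ∀ b, sem w (!b) = sem u b) :
    ∃ X : List Instr, overM M X ∧ X.length ≤ 2 ∧ Realizes X u := by
  refine ⟨[.basic (.plain (Cb, Cb)), .basic w], ?_, by simp, ?_⟩
  · intro i hi v hv
    simp at hi
    rcases hi with hi | hi <;> subst hi <;> cases hv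
    exacts [hcc, hm]
  · rw [realizes_iff]
    intro b n
    rw [behav_two]
    simp [expected, hs]

end

lemma bfun_cases (f : BFun) : f = Fb ∨ f = Tb ∨ f = Ib ∨ f = Cb := by
  cases hf : f false <;> cases ht : f true
  · exact .inl (funext fun b => by cases b <;> simp [Fb, hf, ht])
  · exact .inr (.inr (.inl (funext fun b => by cases b <;> simp [Ib, hf, ht])))
  · exact .inr (.inr (.inr (funext fun b => by cases b <;> simp [Cb, hf, ht])))
  · exact .inr (.inl (funext fun b => by cases b <;> simp [Tb, hf, ht]))

set_option maxHeartbeats 2000000 in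
theorem aux_complete :
    kComplete ({(Fb, Fb), (Tb, Tb), (Ib, Ib), (Cb, Cb),
                (Ib, Fb), (Ib, Tb)} : Set Method) 2 := by
  intro u
  obtain (m | m | m) := u <;> obtain ⟨p, q⟩ := m <;>
    rcases bfun_cases p with rfl | rfl | rfl | rfl <;>
    rcases bfun_cases q with rfl | rfl | rfl | rfl <;>
    first
      | (refine single_realizer (.plain (Fb, Fb)) (by simp [PrimInstr.method]) ?_; intro b; cases b <;> rfl)
      | (refine single_realizer (.plain (Tb, Tb)) (by simp [PrimInstr.method]) ?_; intro b; cases b <;> rfl)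
      | (refine single_realizer (.plain (Ib, Ib)) (by simp [PrimInstr.method]) ?_; intro b; cases b <;> rfl)
      | (refine single_realizer (.plain (Cb, Cb)) (by simp [PrimInstr.method]) ?_; intro b; cases b <;> rfl)
      | (refine single_realizer (.ptest (Ib, Fb)) (by simp [PrimInstr.method]) ?_; intro b; cases b <;> rfl)
      | (refine single_realizer (.ptest (Ib, Tb)) (by simp [PrimInstr.method]) ?_; intro b; cases b <;> rfl)
      | (refine single_realizer (.ptest (Ib, Ib)) (by simp [PrimInstr.method]) ?_; intro b; cases b <;> rfl)
      | (refine single_realizer (.ntest (Ib, Fb)) (by simp [PrimInstr.method]) ?_; intro b; cases b <;> rfl)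
      | (refine single_realizer (.ntest (Ib, Tb)) (by simp [PrimInstr.method]) ?_; intro b; cases b <;> rfl)
      | (refine single_realizer (.ntest (Ib, Ib)) (by simp [PrimInstr.method]) ?_; intro b; cases b <;> rfl)
      | (refine skip_realizer (Fb, Fb) (by simp) ?_; intro b; cases b <;> rfl)
      | (refine skip_realizer (Tb, Tb) (by simp) ?_; intro b; cases b <;> rfl)
      | (refine skip_realizer (Ib, Ib) (by simp) ?_; intro b; cases b <;> rfl)
      | (refine skip_realizer (Cb, Cb) (by simp) ?_; intro b; cases b <;> rfl)
      | (refine two_realizer (.ptest (Ib, Ib)) (by simp) (by simp [PrimInstr.method]) ?_; intro b; cases b <;> rfl)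
      | (refine two_realizer (.ntest (Ib, Ib)) (by simp) (by simp [PrimInstr.method]) ?_; intro b; cases b <;> rfl)

theorem aux_not_one :
    ¬ kComplete ({(Fb, Fb), (Tb, Tb), (Ib, Ib), (Cb, Cb),
                  (Ib, Fb), (Ib, Tb)} : Set Method) 1 := by
  intro h
  obtain ⟨X, hM, hlen, hR⟩ := h (.ntest (Tb, Cb))
  rcases X with _ | ⟨i, _ | ⟨j, t⟩⟩
  · have := hR true 2
    revert this; decide
  · rcases i with v | l | _
    · have hv := hM (.basic v) (by simp) v rfl
      simp [PrimInstr.method, Fb, Tb, Ib, Cb] at hv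
      obtain (v | v | v) := v <;>
        rcases hv with hv | hv | hv | hv | hv | hv <;>
          (try subst hv) <;>
          first
          | (have h1 := hR true 1; have h2 := hR true 2;
             have h3 := hR false 1; have h4 := hR false 2;
             revert h1 h2 h3 h4; decide)
    · rcases l with _ | _ | _ | k
      · have := hR true 2; revert this; decide
      · have := hR true 2; revert this; decide
      · have := hR true 2; revert this; decide
      · have h2 := hR true 2
        have hg : ([Instr.jump (k + 3)] ++ List.replicate 2 Instr.halt)[0 + (k + 3)]? = none := by
          rw [List.getElem?_eq_none_iff]
          simp
        rw [behav_single] at h2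
        simp [behav, run, hg, expected, sem, Tb, Cb] at h2
    · have := hR true 2; revert this; decide
  · simp at hlen

/-- The instruction set with methods {(F,F),(T,T),(I,I),(C,C),(I,F),(I,T)} is
strictly 2-size-bounded functionally complete. -/
theorem strictly_two_size_bounded_complete :
    kComplete ({(Fb, Fb), (Tb, Tb), (Ib, Ib), (Cb, Cb),
                (Ib, Fb), (Ib, Tb)} : Set Method) 2 ∧
    ¬ kComplete ({(Fb, Fb), (Tb, Tb), (Ib, Ib), (Cb, Cb),
                  (Ib, Fb), (Ib, Tb)} : Set Method) 1 :=
  ⟨aux_complete, aux_not_one⟩
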